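/- Let Γ' be a finite simple graph having a cone vertex (a vertex adjacent to every other vertex of Γ'), let Λ be any finite simple graph, and let Γ = Γ' ∗ Λ be their join (the graph on the disjoint union of the vertex sets containing all edges of Γ', all edges of Λ, and all edges between vertices of Γ' and vertices of Λ). Then BB(Γ) is isomorphic to A(Δ) for some finite simple graph Δ, i.e., BB(Γ) is a right-angled Artin group. -/

import Mathlib

def raagRels {V : Type} (G : SimpleGraph V) : Set (FreeGroup V) :=
  {r | ∃ v w : V, G.Adj v w ∧
    r = FreeGroup.of v * FreeGroup.of w * (FreeGroup.of v)⁻¹ * (FreeGroup.of w)⁻¹}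

/-- The right-angled Artin group of a simple graph. -/
abbrev RAAG {V : Type} (G : SimpleGraph V) : Type := PresentedGroup (raagRels G)

/-- The canonical generator of `RAAG G` corresponding to a vertex. -/
def raagGen {V : Type} (G : SimpleGraph V) (v : V) : RAAG G :=
  PresentedGroup.of (rels := raagRels G) v

/-- The homomorphism `A(Γ) → ℤ` sending every vertex generator to `1`. -/
def bbgChar {V : Type} (G : SimpleGraph V) : RAAG G →* Multiplicative ℤ :=
  PresentedGroup.toGroup (f := fun _ : V => Multiplicative.ofAdd (1 : ℤ)) (by
    rintro r ⟨v, w, -, rfl⟩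
    simp only [map_mul, map_inv, FreeGroup.lift_apply_of]
    group)

/-- The Bestvina–Brady group of a simple graph, as a subgroup of the RAAG. -/
def BBG {V : Type} (G : SimpleGraph V) : Subgroup (RAAG G) := (bbgChar G).ker

/-- A group is a RAAG if it is isomorphic to the RAAG on some finite simple graph. -/
def IsRAAG (H : Type) [Group H] : Prop :=
  ∃ (W : Type) (_ : Fintype W) (Δ : SimpleGraph W), Nonempty (H ≃* RAAG Δ)

/-- The join of two graphs: all edges of both graphs, plus all edges between them. -/
def joinGraph {V W : Type} (G : SimpleGraph V) (H : SimpleGraph W) : SimpleGraph (V ⊕ W) :=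
  SimpleGraph.fromRel (fun x y =>
    (∃ a b : V, x = Sum.inl a ∧ y = Sum.inl b ∧ G.Adj a b) ∨
    (∃ a b : W, x = Sum.inr a ∧ y = Sum.inr b ∧ H.Adj a b) ∨
    (∃ (a : V) (b : W), x = Sum.inl a ∧ y = Sum.inr b))

lemma raag_comm {V : Type} {G : SimpleGraph V} {v w : V} (h : G.Adj v w) :
    Commute (raagGen G v) (raagGen G w) := by
  have h1 : PresentedGroup.mk (raagRels G)
      (FreeGroup.of v * FreeGroup.of w * (FreeGroup.of v)⁻¹ * (FreeGroup.of w)⁻¹) = 1 :=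
    (QuotientGroup.eq_one_iff _).2 (Subgroup.subset_normalClosure ⟨v, w, h, rfl⟩)
  have h2 : raagGen G v * raagGen G w * (raagGen G v)⁻¹ * (raagGen G w)⁻¹ = 1 := by
    simpa only [map_mul, map_inv, raagGen, PresentedGroup.of] using h1
  rw [mul_inv_eq_one, mul_inv_eq_iff_eq_mul] at h2
  exact h2

lemma bbgChar_gen {V : Type} (G : SimpleGraph V) (v : V) :
    bbgChar G (raagGen G v) = Multiplicative.ofAdd (1 : ℤ) :=
  PresentedGroup.toGroup.of _

/-- If `Γ'` has a cone vertex, then the Bestvina–Brady group of the join `Γ' ∗ Λ`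
is a RAAG. -/
theorem stmt_5 {V W : Type} [Fintype V] [Fintype W] (G' : SimpleGraph V) (Λ : SimpleGraph W)
    (hcone : ∃ v : V, ∀ w : V, w ≠ v → G'.Adj v w) :
    IsRAAG ↥(BBG (joinGraph G' Λ)) := by
  classical
  obtain ⟨v0, hv0⟩ := hcone
  set Γ : SimpleGraph (V ⊕ W) := joinGraph G' Λ with hΓdef
  set z0 : V ⊕ W := Sum.inl v0 with hz0def
  -- z0 is a cone vertex of Γ
  have hz0 : ∀ x : V ⊕ W, x ≠ z0 → Γ.Adj z0 x := by
    intro x hx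
    refine (SimpleGraph.fromRel_adj _ _ _).2 ⟨fun h => hx h.symm, ?_⟩
    left
    cases x with
    | inl a =>
      exact Or.inl ⟨v0, a, rfl, rfl, hv0 a (fun h => hx (by simp [hz0def, h]))⟩
    | inr b =>
      exact Or.inr (Or.inr ⟨v0, b, rfl, rfl⟩)
  set U := {x : V ⊕ W // x ≠ z0} with hUdef
  set Δ : SimpleGraph U := SimpleGraph.comap Subtype.val Γ with hΔdef
  set c : RAAG Γ := raagGen Γ z0 with hcdef
  -- c is central
  have hcent : ∀ g : RAAG Γ, Commute c g := by
    have hid : (MulAut.conj c).toMonoidHom = MonoidHom.id (RAAG Γ) := by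
      apply PresentedGroup.ext
      intro x
      show c * PresentedGroup.of x * c⁻¹ = PresentedGroup.of x
      by_cases hx : x = z0
      · subst hx
        show c * c * c⁻¹ = c
        group
      · have hcm : Commute c (raagGen Γ x) := raag_comm (hz0 x hx)
        rw [mul_inv_eq_iff_eq_mul]
        exact hcm.eq
    intro g
    have := DFunLike.congr_fun hid g
    simp only [MulEquiv.coe_toMonoidHom, MulAut.conj_apply, MonoidHom.id_apply] at this
    rw [mul_inv_eq_iff_eq_mul] at this
    exact this
  -- the projection π : RAAG Γ →* RAAG Δ
  set fπ : V ⊕ W → RAAG Δ := fun x => if h : x = z0 then 1 else raagGen Δ ⟨x, h⟩ with hfπ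
  have hπrel : ∀ r ∈ raagRels Γ, FreeGroup.lift fπ r = 1 := by
    rintro r ⟨x, y, hxy, rfl⟩
    simp only [map_mul, map_inv, FreeGroup.lift_apply_of]
    have hc : Commute (fπ x) (fπ y) := by
      by_cases hx : x = z0
      · rw [hfπ]; simp only [dif_pos hx]; exact Commute.one_left _
      by_cases hy : y = z0
      · rw [hfπ]; simp only [dif_pos hy]; exact Commute.one_right _
      · rw [hfπ]; simp only [dif_neg hx, dif_neg hy]
        exact raag_comm (G := Δ) (v := ⟨x, hx⟩) (w := ⟨y, hy⟩) hxy
    rw [hc.eq]; group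
  set π : RAAG Γ →* RAAG Δ := PresentedGroup.toGroup hπrel with hπdef
  have hπ_gen : ∀ x : V ⊕ W, π (raagGen Γ x) = fπ x := fun x => PresentedGroup.toGroup.of _
  -- the section ψ : RAAG Δ →* RAAG Γ
  set fψ : U → RAAG Γ := fun u => raagGen Γ u.val * c⁻¹ with hfψ
  have hψrel : ∀ r ∈ raagRels Δ, FreeGroup.lift fψ r = 1 := by
    rintro r ⟨u, w, huw, rfl⟩
    simp only [map_mul, map_inv, FreeGroup.lift_apply_of]
    have h1 : Commute (raagGen Γ u.val) (raagGen Γ w.val) := raag_comm (G := Γ) huw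
    have hc : Commute (fψ u) (fψ w) := by
      rw [hfψ]
      exact ((h1.mul_right ((hcent (raagGen Γ u.val)).symm.inv_right)).mul_left
        (((hcent (raagGen Γ w.val)).inv_left).mul_right (Commute.refl c⁻¹)))
    rw [hc.eq]; group
  set ψ : RAAG Δ →* RAAG Γ := PresentedGroup.toGroup hψrel with hψdef
  have hψ_gen : ∀ u : U, ψ (raagGen Δ u) = raagGen Γ u.val * c⁻¹ :=
    fun u => PresentedGroup.toGroup.of _
  -- χ ∘ ψ = 1
  have hχψ : ∀ h : RAAG Δ, bbgChar Γ (ψ h) = 1 := by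
    have : (bbgChar Γ).comp ψ = 1 := by
      apply PresentedGroup.ext
      intro u
      show bbgChar Γ (ψ (raagGen Δ u)) = 1
      rw [hψ_gen, map_mul, map_inv, bbgChar_gen, hcdef, bbgChar_gen]
      group
    intro h
    exact DFunLike.congr_fun this h
  -- π ∘ ψ = id
  have hπψ : ∀ h : RAAG Δ, π (ψ h) = h := by
    have : π.comp ψ = MonoidHom.id (RAAG Δ) := by
      apply PresentedGroup.ext
      intro u
      show π (ψ (raagGen Δ u)) = raagGen Δ u
      rw [hψ_gen, map_mul, map_inv, hπ_gen, hπ_gen]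
      simp [hfπ, u.prop]
    intro h
    exact DFunLike.congr_fun this h
  -- θ = id, where θ g = ψ (π g) * c ^ (χ g)
  have hc' : ∀ (n : ℤ) (g : RAAG Γ), c ^ n * g = g * c ^ n :=
    fun n g => (((hcent g).zpow_left n)).eq
  have hθ : ∀ g : RAAG Γ, ψ (π g) * c ^ (bbgChar Γ g).toAdd = g := by
    set θ : RAAG Γ →* RAAG Γ := MonoidHom.mk'
      (fun g => ψ (π g) * c ^ (bbgChar Γ g).toAdd) (by
        intro g h
        simp only [map_mul, toAdd_mul, zpow_add]
        calc ψ (π g) * ψ (π h) * (c ^ (bbgChar Γ g).toAdd * c ^ (bbgChar Γ h).toAdd)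
            = ψ (π g) * (ψ (π h) * c ^ (bbgChar Γ g).toAdd) * c ^ (bbgChar Γ h).toAdd := by
              group
          _ = ψ (π g) * (c ^ (bbgChar Γ g).toAdd * ψ (π h)) * c ^ (bbgChar Γ h).toAdd := by
              rw [hc' (bbgChar Γ g).toAdd (ψ (π h))]
          _ = ψ (π g) * c ^ (bbgChar Γ g).toAdd * (ψ (π h) * c ^ (bbgChar Γ h).toAdd) := by
              group) with hθdef
    have hid : θ = MonoidHom.id (RAAG Γ) := by
      apply PresentedGroup.ext
      intro x
      show ψ (π (raagGen Γ x)) * c ^ (bbgChar Γ (raagGen Γ x)).toAdd = raagGen Γ x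
      rw [bbgChar_gen, hπ_gen]
      by_cases hx : x = z0
      · subst hx
        have h1 : fπ z0 = 1 := dif_pos rfl
        rw [h1, map_one, one_mul, toAdd_ofAdd, zpow_one]
      · have h1 : fπ x = raagGen Δ ⟨x, hx⟩ := dif_neg hx
        rw [h1, hψ_gen]
        simp only [toAdd_ofAdd, zpow_one, inv_mul_cancel_right]
    intro g
    exact DFunLike.congr_fun hid g
  -- assemble the isomorphism
  refine ⟨U, inferInstance, Δ, ⟨?_⟩⟩
  refine
    { toFun := fun g => π g.val
      invFun := fun h => ⟨ψ h, hχψ h⟩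
      left_inv := ?_
      right_inv := fun h => hπψ h
      map_mul' := fun a b => by simp only [Subgroup.coe_mul, map_mul] }
  rintro ⟨g, hg⟩
  apply Subtype.ext
  have hg1 : bbgChar Γ g = 1 := hg
  have := hθ g
  rw [hg1] at this
  simpa using this
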